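/- Let A be an m×n integer matrix of full rank n and F ⊆ [m] with |F| = n such that the n×n submatrix A_F is invertible. Then the enhanced solution matrices {𝔐_{E(i,j)} : i < j, i,j ∈ [m]\F} are linearly independent over ℚ; in particular there are at least C(m−n, 2) linearly independent skew-symmetric solutions Λ of AᵀΛ = 0. -/

import Mathlib

/-- The strictly monotone embedding `Fin n → Fin (n+2)` whose image is the
complement `R(i,j)` of `{i, j}` (for `i < j`). -/
def rowEmb {n : ℕ} (i j : Fin (n + 2)) (h : i < j) : Fin n → Fin (n + 2) :=
  j.succAbove ∘ Fin.succAbove ⟨i.1, by have := j.2; have := Fin.lt_def.mp h; omega⟩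

/-- The skew-symmetric matrix `M(A)` of signed maximal minors of an
`(n+2) × n` matrix `A`: `m i j = (-1)^(i+j) det (A_{R(i,j)})` for `i < j`,
`m i i = 0`, and `m i j = (-1)^(i+j+1) det (A_{R(i,j)})` for `j < i`. -/
def minorMatrix {n : ℕ} (A : Matrix (Fin (n + 2)) (Fin n) ℤ) :
    Matrix (Fin (n + 2)) (Fin (n + 2)) ℤ :=
  Matrix.of fun i j =>
    if h : i < j then (-1) ^ (i.1 + j.1) * (A.submatrix (rowEmb i j h) id).det
    else if h' : j < i then (-1) ^ (i.1 + j.1 + 1) * (A.submatrix (rowEmb j i h') id).det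
    else 0

/-- The enhanced solution matrix `𝔐_E(A)`: the `m × m` integer matrix whose
submatrix on rows and columns in `E` (of cardinality `n+2`) is the
signed-minor matrix `M(A_E)` of the `(n+2) × n` submatrix `A_E` of `A` with
rows indexed by `E` in increasing order, all other entries being zero. -/
def enhancedMatrix {m n : ℕ} (A : Matrix (Fin m) (Fin n) ℤ) (E : Finset (Fin m)) :
    Matrix (Fin m) (Fin m) ℤ :=
  if hE : E.card = n + 2 then
    Matrix.of fun r s =>
      if hr : r ∈ E then
        if hs : s ∈ E then
          minorMatrix (A.submatrix (fun t => ((E.orderIsoOfFin hE t : Fin m))) id)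
            ((E.orderIsoOfFin hE).symm ⟨r, hr⟩) ((E.orderIsoOfFin hE).symm ⟨s, hs⟩)
        else 0
      else 0
  else 0

lemma rowEmb_strictMono {n : ℕ} (i j : Fin (n + 2)) (h : i < j) :
    StrictMono (rowEmb i j h) :=
  (Fin.strictMono_succAbove j).comp (Fin.strictMono_succAbove _)

lemma rowEmb_ne_left {n : ℕ} (i j : Fin (n + 2)) (h : i < j) (t : Fin n) :
    rowEmb i j h t ≠ i := by
  set i' : Fin (n+1) := ⟨i.1, by have := j.2; have := Fin.lt_def.mp h; omega⟩
  have hci : i'.castSucc = i := by ext; simp [i']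
  intro hEq
  have h1 : j.succAbove i' = i := by
    rw [Fin.succAbove_of_castSucc_lt]
    · exact hci
    · rw [hci]; exact h
  have := (Fin.succAbove_right_injective (p := j)) (hEq.trans h1.symm)
  exact Fin.succAbove_ne i' t this

lemma rowEmb_ne_right {n : ℕ} (i j : Fin (n + 2)) (h : i < j) (t : Fin n) :
    rowEmb i j h t ≠ j := Fin.succAbove_ne j _

lemma card_lt_pairs {α : Type*} [LinearOrder α] [DecidableEq α] (s : Finset α) :
    ((s ×ˢ s).filter fun p => p.1 < p.2).card = s.card.choose 2 := by
  rw [← Finset.card_powersetCard 2 s]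
  apply Finset.card_bij (fun p _ => ({p.1, p.2} : Finset α))
  · intro p hp
    simp only [Finset.mem_filter, Finset.mem_product] at hp
    rw [Finset.mem_powersetCard]
    refine ⟨fun x hx => ?_, Finset.card_pair hp.2.ne⟩
    simp only [Finset.mem_insert, Finset.mem_singleton] at hx
    rcases hx with h | h <;> subst h
    · exact hp.1.1
    · exact hp.1.2
  · intro p hp q hq hpq
    simp only [Finset.mem_filter, Finset.mem_product] at hp hq
    have h1 : p.1 ∈ ({q.1, q.2} : Finset α) := hpq ▸ (by simp)
    have h2 : p.2 ∈ ({q.1, q.2} : Finset α) := hpq ▸ (by simp)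
    simp only [Finset.mem_insert, Finset.mem_singleton] at h1 h2
    have h3 : q.1 ∈ ({p.1, p.2} : Finset α) := hpq ▸ (by simp)
    simp only [Finset.mem_insert, Finset.mem_singleton] at h3
    have hp2 := hp.2; have hq2 := hq.2
    have : p.1 = q.1 ∧ p.2 = q.2 := by
      rcases h1 with h1 | h1 <;> rcases h2 with h2 | h2
      · exact absurd hp2 (by rw [h1, h2]; exact lt_irrefl _)
      · exact ⟨h1, h2⟩
      · exact absurd (h1 ▸ h2 ▸ hp2) (lt_asymm hq2)
      · exact absurd hp2 (by rw [h1, h2]; exact lt_irrefl _)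
    exact Prod.ext this.1 this.2
  · intro t ht
    rw [Finset.mem_powersetCard] at ht
    obtain ⟨a, b, hab, rfl⟩ := Finset.card_eq_two.mp ht.2
    rcases hab.lt_or_gt with h | h
    · refine ⟨(a, b), ?_, rfl⟩
      simp only [Finset.mem_filter, Finset.mem_product]
      exact ⟨⟨ht.1 (by simp), ht.1 (by simp)⟩, h⟩
    · refine ⟨(b, a), ?_, by rw [Finset.pair_comm]⟩
      simp only [Finset.mem_filter, Finset.mem_product]
      exact ⟨⟨ht.1 (by simp), ht.1 (by simp)⟩, h⟩

lemma enhanced_entry_ne {m n : ℕ} (A : Matrix (Fin m) (Fin n) ℤ) (F : Finset (Fin m))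
    {i j i' j' : Fin m} (hi : i ∉ F) (hj : j ∉ F) (hij : i < j)
    (hi' : i' ∉ F) (hj' : j' ∉ F) (hij' : i' < j') (hne : (i, j) ≠ (i', j')) :
    enhancedMatrix A (insert i' (insert j' F)) i j = 0 := by
  rw [enhancedMatrix]
  split_ifs with hE
  · simp only [Matrix.of_apply]
    split_ifs with hr hs
    · exfalso
      simp only [Finset.mem_insert] at hr hs
      have hr' : i = i' ∨ i = j' := by
        rcases hr with h | h | h
        exacts [Or.inl h, Or.inr h, absurd h hi]
      have hs' : j = i' ∨ j = j' := by
        rcases hs with h | h | h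
        exacts [Or.inl h, Or.inr h, absurd h hj]
      have hne' : ¬(i = i' ∧ j = j') := fun ⟨h1, h2⟩ => hne (by rw [h1, h2])
      have l1 : i.1 < j.1 := hij
      have l2 : i'.1 < j'.1 := hij'
      have hv : i.1 ≠ i'.1 ∨ j.1 ≠ j'.1 := by
        by_contra hc
        push_neg at hc
        exact hne' ⟨Fin.ext hc.1, Fin.ext hc.2⟩
      rcases hr' with h1 | h1 <;> rcases hs' with h2 | h2 <;>
        · have e1 := congrArg Fin.val h1
          have e2 := congrArg Fin.val h2
          omega
    · rfl
    · rfl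
  · rfl

lemma enhanced_entry_diag {m n : ℕ} (A : Matrix (Fin m) (Fin n) ℤ) (F : Finset (Fin m))
    (hF : F.card = n) (e : Fin n → Fin m) (he : StrictMono e) (heF : ∀ t, e t ∈ F)
    {i j : Fin m} (hi : i ∉ F) (hj : j ∉ F) (hij : i < j) :
    ∃ k : ℕ, enhancedMatrix A (insert i (insert j F)) i j
      = (-1) ^ k * (A.submatrix e id).det := by
  have hiI : i ∉ insert j F := by
    simp only [Finset.mem_insert]
    rintro (rfl | h)
    · exact lt_irrefl _ hij
    · exact hi h
  have hE : (insert i (insert j F)).card = n + 2 := by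
    rw [Finset.card_insert_of_notMem hiI, Finset.card_insert_of_notMem hj, hF]
  set E := insert i (insert j F) with hEdef
  have hiE : i ∈ E := Finset.mem_insert_self _ _
  have hjE : j ∈ E := Finset.mem_insert_of_mem (Finset.mem_insert_self _ _)
  rw [enhancedMatrix, dif_pos hE]
  simp only [Matrix.of_apply, dif_pos hiE, dif_pos hjE]
  set σ := E.orderIsoOfFin hE with hσ
  set k₁ := σ.symm ⟨i, hiE⟩
  set k₂ := σ.symm ⟨j, hjE⟩
  have h12 : k₁ < k₂ := by
    apply σ.symm.lt_iff_lt.mpr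
    exact Subtype.mk_lt_mk.mpr hij
  rw [minorMatrix]
  simp only [Matrix.of_apply, dif_pos h12]
  refine ⟨k₁.1 + k₂.1, ?_⟩
  rw [Matrix.submatrix_submatrix]
  congr 2
  have hne1 : ∀ t, rowEmb k₁ k₂ h12 t ≠ k₁ := rowEmb_ne_left k₁ k₂ h12
  have hne2 : ∀ t, rowEmb k₁ k₂ h12 t ≠ k₂ := rowEmb_ne_right k₁ k₂ h12
  have hmem : ∀ t, ((σ (rowEmb k₁ k₂ h12 t) : Fin m)) ∈ F := by
    intro t
    have hmemE := (σ (rowEmb k₁ k₂ h12 t)).2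
    have hni : (σ (rowEmb k₁ k₂ h12 t) : Fin m) ≠ i := by
      intro hEq
      apply hne1 t
      have : σ (rowEmb k₁ k₂ h12 t) = ⟨i, hiE⟩ := Subtype.ext hEq
      rw [← σ.symm_apply_apply (rowEmb k₁ k₂ h12 t), this]
    have hnj : (σ (rowEmb k₁ k₂ h12 t) : Fin m) ≠ j := by
      intro hEq
      apply hne2 t
      have : σ (rowEmb k₁ k₂ h12 t) = ⟨j, hjE⟩ := Subtype.ext hEq
      rw [← σ.symm_apply_apply (rowEmb k₁ k₂ h12 t), this]
    rcases Finset.mem_insert.mp hmemE with h | h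
    · exact absurd h hni
    rcases Finset.mem_insert.mp h with h | h
    · exact absurd h hnj
    · exact h
  have hsm : StrictMono (fun t => ((σ (rowEmb k₁ k₂ h12 t) : Fin m))) := by
    intro a b hab
    exact Subtype.coe_lt_coe.mpr (σ.lt_iff_lt.mpr (rowEmb_strictMono k₁ k₂ h12 hab))
  have h1 := Finset.orderEmbOfFin_unique hF hmem hsm
  have h2 := Finset.orderEmbOfFin_unique hF (fun t => heF t) he
  have hfe : ((fun t => ((σ t : Fin m))) ∘ rowEmb k₁ k₂ h12) = e := h1.trans h2.symm
  rw [hfe]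
  rfl

/-- If `A` is an `m × n` integer matrix of full rank `n` and `F ⊆ [m]` with
`|F| = n` is such that the square submatrix `A_F` is invertible, then the
enhanced solution matrices `𝔐_{E(i,j)}` for pairs `i < j` outside `F` are
linearly independent over `ℚ`; in particular there are at least `C(m-n, 2)`
linearly independent skew-symmetric solutions of `Aᵀ Λ = 0`. -/
theorem enhancedMatrices_linearIndependent (m n : ℕ) (hmn : n + 2 < m)
    (A : Matrix (Fin m) (Fin n) ℤ)
    (hrank : (A.map ((↑) : ℤ → ℚ)).rank = n)
    (F : Finset (Fin m)) (hF : F.card = n)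
    (e : Fin n → Fin m) (he : StrictMono e) (heF : ∀ t, e t ∈ F)
    (hdet : (A.submatrix e id).det ≠ 0) :
    LinearIndependent ℚ
      (fun p : {p : Fin m × Fin m // p.1 ∉ F ∧ p.2 ∉ F ∧ p.1 < p.2} =>
        (enhancedMatrix A (insert p.1.1 (insert p.1.2 F))).map ((↑) : ℤ → ℚ)) ∧
    Nat.card {p : Fin m × Fin m // p.1 ∉ F ∧ p.2 ∉ F ∧ p.1 < p.2} =
      (m - n).choose 2 := by
  classical
  constructor
  · rw [Fintype.linearIndependent_iff]
    intro g hg p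
    have h0 : (∑ q, g q • (enhancedMatrix A (insert q.1.1 (insert q.1.2 F))).map
        ((↑) : ℤ → ℚ)) p.1.1 p.1.2 = 0 := by rw [hg]; rfl
    rw [Matrix.sum_apply] at h0
    simp only [Matrix.smul_apply, Matrix.map_apply, smul_eq_mul] at h0
    rw [Finset.sum_eq_single p (fun q _ hq => by
        rw [enhanced_entry_ne A F p.2.1 p.2.2.1 p.2.2.2 q.2.1 q.2.2.1 q.2.2.2
          (fun h => hq (Subtype.ext (by
            rw [← Prod.mk.eta (p := p.1), ← Prod.mk.eta (p := q.1), h])).symm)]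
        simp)
      (fun h => absurd (Finset.mem_univ p) h)] at h0
    obtain ⟨k, hk⟩ := enhanced_entry_diag A F hF e he heF p.2.1 p.2.2.1 p.2.2.2
    rw [hk] at h0
    push_cast at h0
    rcases mul_eq_zero.mp h0 with h | h
    · exact h
    · exact absurd h (mul_ne_zero (pow_ne_zero _ (by norm_num))
        (by rw [← Int.cast_det]; exact Int.cast_ne_zero.mpr hdet))
  · rw [Nat.card_eq_fintype_card, Fintype.card_subtype]
    have hset : (Finset.univ.filter fun p : Fin m × Fin m =>
        p.1 ∉ F ∧ p.2 ∉ F ∧ p.1 < p.2) = ((Fᶜ ×ˢ Fᶜ).filter fun p => p.1 < p.2) := by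
      ext p
      simp only [Finset.mem_filter, Finset.mem_univ, Finset.mem_product,
        Finset.mem_compl, true_and]
      tauto
    rw [hset, card_lt_pairs, Finset.card_compl, hF, Fintype.card_fin]
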